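/- With M, M*, T_e as above, the Swendsen-Wang transition matrix on the random-cluster model factorizes as P_SW = M (∏_{e∈E} T_e) M*, where P_SW(A,B) = q^{-c(A)} (p/(1−p))^{|B|} Σ_{σ∈Ω_P} (1−p)^{|E(σ)|} 𝟙(σ ∈ Ω(A∪B)). -/

import Mathlib

open scoped BigOperators
open scoped Classical

noncomputable section

/-- Number of connected components of the spanning subgraph `(V, A)`. -/
def numComp {V : Type*} (A : Finset (Sym2 V)) : ℕ :=
  Nat.card (SimpleGraph.fromEdgeSet (↑A : Set (Sym2 V))).ConnectedComponent

variable {V : Type*} [Fintype V] [DecidableEq V]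

/-- The random-cluster state space: subsets of the edge set `E`. -/
def RC (E : Finset (Sym2 V)) : Type _ := {A : Finset (Sym2 V) // A ⊆ E}

instance (E : Finset (Sym2 V)) : Fintype (RC E) := Subtype.fintype _
instance (E : Finset (Sym2 V)) : DecidableEq (RC E) := Subtype.instDecidableEq

/-- The joint state space `Ω_J = Ω_P × Ω_RC`. -/
def J (E : Finset (Sym2 V)) (q : ℕ) : Type _ := (V → Fin q) × RC E

instance (E : Finset (Sym2 V)) (q : ℕ) : Fintype (J E q) := instFintypeProd _ _
instance (E : Finset (Sym2 V)) (q : ℕ) : DecidableEq (J E q) := instDecidableEqProd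

/-- `M(B,(σ,A)) = q^{-c(B)} 𝟙(A=B) 𝟙(σ ∈ Ω(B))`. -/
def Mmat (E : Finset (Sym2 V)) (q : ℕ) : Matrix (RC E) (J E q) ℝ :=
  Matrix.of fun B x =>
    if x.2 = B ∧ ∀ u v : V, s(u, v) ∈ B.val → x.1 u = x.1 v
      then ((q : ℝ) ^ numComp B.val)⁻¹ else 0

/-- `M*((σ,A),B) = 𝟙(A=B)`. -/
def MmatStar (E : Finset (Sym2 V)) (q : ℕ) : Matrix (J E q) (RC E) ℝ :=
  Matrix.of fun x B => if x.2 = B then 1 else 0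

/-- The single-edge update matrix `T_e` on the joint space. -/
def Tmat (E : Finset (Sym2 V)) (q : ℕ) (p : ℝ) (e : Sym2 V) :
    Matrix (J E q) (J E q) ℝ :=
  Matrix.of fun x y =>
    if x.1 = y.1 then
      (if ∀ u v : V, e = s(u, v) → x.1 u = x.1 v then
        (if y.2.val = insert e x.2.val then p
          else if y.2.val = x.2.val.erase e then 1 - p else 0)
      else
        (if y.2.val = x.2.val.erase e then 1 else 0))
    else 0

/-- `e` is monochromatic under the coloring `σ`. -/
def mono {q : ℕ} (σ : V → Fin q) (e : Sym2 V) : Prop :=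
  ∀ u v : V, e = s(u, v) → σ u = σ v

lemma erase_eq_iff_of_mem {α : Type*} [DecidableEq α] {S T : Finset α} {e : α}
    (he : e ∈ S) : S.erase e = T.erase e ↔ S = insert e T := by
  constructor
  · intro h; ext x
    rcases eq_or_ne x e with rfl | hx
    · simp [he]
    · have := Finset.ext_iff.mp h x
      simp only [Finset.mem_erase, hx, ne_eq, not_false_iff, true_and] at this
      simp [Finset.mem_insert, hx, this]
  · intro h; ext x
    rcases eq_or_ne x e with rfl | hx
    · simp
    · have := Finset.ext_iff.mp h x
      simp only [Finset.mem_insert, hx, false_or] at this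
      simp [Finset.mem_erase, hx, this]

lemma erase_eq_iff_of_not_mem {α : Type*} [DecidableEq α] {S T : Finset α} {e : α}
    (he : e ∉ S) : S.erase e = T.erase e ↔ S = T.erase e := by
  rw [Finset.erase_eq_of_notMem he]

lemma spike_sum {α : Type*} [Fintype α] [DecidableEq α] (f : α → ℝ) (a : α) :
    (∑ z, (if z = a then (1 : ℝ) else 0) * f z) = f a := by
  simp [ite_mul]

lemma J_pair_eq {E : Finset (Sym2 V)} {q : ℕ} (σ ρ : V → Fin q) (C : RC E)
    (X : Finset (Sym2 V)) (hX : X ⊆ E) :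
    (((ρ, C) : J E q) = (σ, ⟨X, hX⟩)) ↔ (ρ = σ ∧ C.val = X) := by
  constructor
  · intro h
    exact ⟨congrArg Prod.fst h, congrArg Subtype.val (congrArg Prod.snd h)⟩
  · rintro ⟨h1, h2⟩
    exact Prod.ext h1 (Subtype.ext h2)

lemma collapse_sum {α : Type*} [Fintype α] [DecidableEq α] (f : α → ℝ) (a : α) (c : ℝ) :
    (∑ z, (if z = a then c else 0) * f z) = c * f a := by
  simp [ite_mul]

lemma collapse_sum2 {α : Type*} [Fintype α] [DecidableEq α] (a : α) (c d : ℝ) :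
    (∑ z : α, c * ((if z = a then (1 : ℝ) else 0) * d)) = c * d := by
  simp [mul_ite, ite_mul]

lemma collapse_sum3 {α : Type*} [Fintype α] [DecidableEq α] (f : α → ℝ) (a : α) :
    (∑ z, f z * (if z = a then (1 : ℝ) else 0)) = f a := by
  simp [mul_ite]

lemma Tmat_apply_eq (E : Finset (Sym2 V)) (q : ℕ) (p : ℝ) (e : Sym2 V) (he : e ∈ E)
    (σ : V → Fin q) (A : RC E) (z : J E q) :
    Tmat E q p e (σ, A) z =
      if mono σ e then
        p * (if z = (σ, ⟨insert e A.val, Finset.insert_subset he A.2⟩) then 1 else 0)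
          + (1 - p) *
            (if z = (σ, ⟨A.val.erase e, (Finset.erase_subset e A.val).trans A.2⟩) then 1 else 0)
      else
        (if z = (σ, ⟨A.val.erase e, (Finset.erase_subset e A.val).trans A.2⟩) then 1 else 0) := by
  obtain ⟨ρ, C⟩ := z
  have hc1 := J_pair_eq σ ρ C (insert e A.val) (Finset.insert_subset he A.2)
  have hc2 := J_pair_eq σ ρ C (A.val.erase e) ((Finset.erase_subset e A.val).trans A.2)
  simp only [Tmat, mono]
  erw [Matrix.of_apply]
  dsimp only
  rw [@if_congr _ (@Eq (J E q) (ρ, C) (σ, ⟨insert e A.val, Finset.insert_subset he A.2⟩)) _ (Classical.propDecidable _) _ _ _ _ _ hc1 rfl rfl,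
    @if_congr _ (@Eq (J E q) (ρ, C) (σ, ⟨A.val.erase e, (Finset.erase_subset e A.val).trans A.2⟩)) _ (Classical.propDecidable _) _ _ _ _ _ hc2 rfl rfl]
  by_cases hρ : ρ = σ
  · subst hρ
    rw [if_pos rfl]
    simp only [eq_self_iff_true, true_and]
    by_cases hm : ∀ u v : V, e = s(u, v) → ρ u = ρ v
    · rw [if_pos hm, if_pos hm]
      by_cases h1 : C.val = insert e A.val
      · have h2 : ¬ C.val = A.val.erase e := by
          rw [h1]; intro h
          exact (Finset.notMem_erase e A.val) (h ▸ Finset.mem_insert_self e A.val)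
        rw [if_pos h1, if_pos h1, if_neg h2]; ring
      · rw [if_neg h1, if_neg h1]
        by_cases h2 : C.val = A.val.erase e
        · rw [if_pos h2, if_pos h2]; ring
        · rw [if_neg h2, if_neg h2]; ring
    · rw [if_neg hm, if_neg hm]
  · have hσρ : ¬ σ = ρ := fun h => hρ h.symm
    rw [if_neg hσρ]
    simp only [hρ, false_and, if_false]
    by_cases hm : ∀ u v : V, e = s(u, v) → σ u = σ v
    · rw [if_pos hm]; ring
    · rw [if_neg hm]

lemma Tprod_apply (E : Finset (Sym2 V)) (q : ℕ) (p : ℝ) (L : List (Sym2 V))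
    (σ τ : V → Fin q) (B : RC E) :
    ∀ A : RC E, L.Nodup → (∀ e ∈ L, e ∈ E) →
      ((L.map (Tmat E q p)).prod) (σ, A) (τ, B) =
        (if τ = σ ∧ B.val \ L.toFinset = A.val \ L.toFinset then 1 else 0) *
          ∏ e ∈ L.toFinset,
            (if mono σ e then (if e ∈ B.val then p else 1 - p)
              else if e ∈ B.val then 0 else 1) := by
  induction L with
  | nil =>
    intro A _ _
    simp only [List.map_nil, List.prod_nil, List.toFinset_nil, Finset.sdiff_empty,
      Finset.prod_empty, mul_one, Matrix.one_apply]
    have : ((σ, A) = ((τ, B) : J E q)) ↔ (τ = σ ∧ B.val = A.val) := by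
      constructor
      · intro h
        have h1 : σ = τ := congrArg Prod.fst h
        have h2 : A = B := congrArg Prod.snd h
        exact ⟨h1.symm, congrArg Subtype.val h2.symm⟩
      · rintro ⟨h1, h2⟩
        exact Prod.ext h1.symm (Subtype.ext h2.symm)
    erw [Matrix.one_apply]
    rw [if_congr this rfl rfl]
  | cons e L ih =>
    intro A hL hLE
    obtain ⟨he, hnd⟩ := List.nodup_cons.mp hL
    have heE : e ∈ E := hLE e List.mem_cons_self
    have heL' : e ∉ L.toFinset := fun h => he (List.mem_toFinset.mp h)
    have hLE' : ∀ f ∈ L, f ∈ E := fun f hf => hLE f (List.mem_cons_of_mem e hf)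
    set Ains : RC E := ⟨insert e A.val, Finset.insert_subset heE A.2⟩ with hAins
    set Aer : RC E := ⟨A.val.erase e, (Finset.erase_subset e A.val).trans A.2⟩ with hAer
    have heB' : e ∈ B.val ∨ e ∉ B.val := em _
    rw [List.map_cons, List.prod_cons]
    erw [Matrix.mul_apply]
    rw [List.toFinset_cons,
      Finset.prod_insert heL']
    have hsd : B.val \ insert e L.toFinset = A.val \ insert e L.toFinset ↔
        (B.val \ L.toFinset).erase e = (A.val \ L.toFinset).erase e := by
      rw [Finset.sdiff_insert, Finset.sdiff_insert]
    by_cases hm : mono σ e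
    · have hT : ∀ z, Tmat E q p e (σ, A) z =
          p * (if z = (σ, Ains) then 1 else 0) + (1 - p) * (if z = (σ, Aer) then 1 else 0) := by
        intro z; rw [Tmat_apply_eq E q p e heE σ A z, if_pos hm]
      simp only [hT, add_mul, mul_assoc]
      rw [Finset.sum_add_distrib, ← Finset.mul_sum, ← Finset.mul_sum]
      rw [@spike_sum (J E q) _ (fun _ _ => (Classical.propDecidable _)) _ (σ, Ains), @spike_sum (J E q) _ (fun _ _ => (Classical.propDecidable _)) _ (σ, Aer)]
      rw [ih Ains hnd hLE', ih Aer hnd hLE', if_pos hm]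
      have hsd1 : Ains.val \ L.toFinset = insert e (A.val \ L.toFinset) :=
        Finset.insert_sdiff_of_notMem _ heL'
      have hsd2 : Aer.val \ L.toFinset = (A.val \ L.toFinset).erase e :=
        Finset.erase_sdiff_comm _ _ _
      rcases heB' with heB | heB
      · have heBL : e ∈ B.val \ L.toFinset := Finset.mem_sdiff.mpr ⟨heB, heL'⟩
        have h2 : ¬(τ = σ ∧ B.val \ L.toFinset = Aer.val \ L.toFinset) := by
          rintro ⟨-, h⟩
          rw [hsd2] at h
          exact (Finset.notMem_erase e _) (h ▸ heBL)
        have h1 : (τ = σ ∧ B.val \ L.toFinset = Ains.val \ L.toFinset) ↔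
            (τ = σ ∧ B.val \ insert e L.toFinset = A.val \ insert e L.toFinset) := by
          rw [hsd1, hsd]
          exact and_congr_right fun _ => (erase_eq_iff_of_mem heBL).symm
        rw [if_neg h2, if_pos heB, if_congr h1 rfl rfl]
        ring
      · have heBL : e ∉ B.val \ L.toFinset := fun h => heB (Finset.mem_sdiff.mp h).1
        have h1 : ¬(τ = σ ∧ B.val \ L.toFinset = Ains.val \ L.toFinset) := by
          rintro ⟨-, h⟩
          rw [hsd1] at h
          exact heBL (h ▸ Finset.mem_insert_self e _)
        have h2 : (τ = σ ∧ B.val \ L.toFinset = Aer.val \ L.toFinset) ↔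
            (τ = σ ∧ B.val \ insert e L.toFinset = A.val \ insert e L.toFinset) := by
          rw [hsd2, hsd]
          exact and_congr_right fun _ => (erase_eq_iff_of_not_mem heBL).symm
        rw [if_neg h1, if_neg heB, if_congr h2 rfl rfl]
        ring
    · have hT : ∀ z, Tmat E q p e (σ, A) z = (if z = (σ, Aer) then 1 else 0) := by
        intro z; rw [Tmat_apply_eq E q p e heE σ A z, if_neg hm]
      simp only [hT]
      rw [@spike_sum (J E q) _ (fun _ _ => (Classical.propDecidable _)) _ (σ, Aer)]
      rw [ih Aer hnd hLE', if_neg hm]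
      have hsd2 : Aer.val \ L.toFinset = (A.val \ L.toFinset).erase e :=
        Finset.erase_sdiff_comm _ _ _
      rcases heB' with heB | heB
      · have heBL : e ∈ B.val \ L.toFinset := Finset.mem_sdiff.mpr ⟨heB, heL'⟩
        have h2 : ¬(τ = σ ∧ B.val \ L.toFinset = Aer.val \ L.toFinset) := by
          rintro ⟨-, h⟩
          rw [hsd2] at h
          exact (Finset.notMem_erase e _) (h ▸ heBL)
        rw [if_neg h2, if_pos heB]
        ring
      · have heBL : e ∉ B.val \ L.toFinset := fun h => heB (Finset.mem_sdiff.mp h).1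
        have h2 : (τ = σ ∧ B.val \ L.toFinset = Aer.val \ L.toFinset) ↔
            (τ = σ ∧ B.val \ insert e L.toFinset = A.val \ insert e L.toFinset) := by
          rw [hsd2, hsd]
          exact and_congr_right fun _ => (erase_eq_iff_of_not_mem heBL).symm
        rw [if_congr h2 rfl rfl, if_neg heB]
        ring

lemma prod_w (E : Finset (Sym2 V)) (q : ℕ) (p : ℝ) (hp1 : (1 : ℝ) - p ≠ 0)
    (σ : V → Fin q) (B : RC E) (hB : ∀ e ∈ B.val, mono σ e) :
    (∏ e ∈ E, (if mono σ e then (if e ∈ B.val then p else 1 - p)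
        else if e ∈ B.val then 0 else 1))
      = (p / (1 - p)) ^ B.val.card * (1 - p) ^ (E.filter (mono σ)).card := by
  have hsub : B.val ⊆ E.filter (mono σ) :=
    fun e he => Finset.mem_filter.mpr ⟨B.2 he, hB e he⟩
  rw [← Finset.prod_filter_mul_prod_filter_not E (mono σ)]
  have h2 : (∏ e ∈ E.filter (fun e => ¬ mono σ e),
      (if mono σ e then (if e ∈ B.val then p else 1 - p)
        else if e ∈ B.val then 0 else 1)) = 1 := by
    apply Finset.prod_eq_one
    intro e heF
    have hnm := (Finset.mem_filter.mp heF).2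
    have heB : e ∉ B.val := fun h => hnm (hB e h)
    rw [if_neg hnm, if_neg heB]
  have h1 : (∏ e ∈ E.filter (mono σ),
      (if mono σ e then (if e ∈ B.val then p else 1 - p)
        else if e ∈ B.val then 0 else 1)) =
      ∏ e ∈ E.filter (mono σ), (if e ∈ B.val then p else 1 - p) :=
    Finset.prod_congr rfl fun e heF => if_pos (Finset.mem_filter.mp heF).2
  rw [h1, h2, mul_one, Finset.prod_ite (fun _ => p) (fun _ => 1 - p),
    Finset.prod_const, Finset.prod_const]
  have hc1 : (E.filter (mono σ)).filter (fun e => e ∈ B.val) = B.val := by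
    rw [Finset.filter_mem_eq_inter]
    exact Finset.inter_eq_right.mpr hsub
  have hc2 : (E.filter (mono σ)).filter (fun e => e ∉ B.val) = E.filter (mono σ) \ B.val :=
    (Finset.sdiff_eq_filter _ _).symm
  rw [hc1, hc2,
    show (E.filter (mono σ)).card = (E.filter (mono σ) \ B.val).card + B.val.card from
      (Finset.card_sdiff_add_card_eq_card hsub).symm,
    pow_add]
  have hpp : p ^ B.val.card = (p / (1 - p)) ^ B.val.card * (1 - p) ^ B.val.card := by
    rw [← mul_pow, div_mul_cancel₀ _ hp1]
  rw [hpp]; ring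

/-- The Swendsen-Wang transition matrix on the random-cluster model
factorizes as `P_SW = M (∏_{e∈E} T_e) M*`, where
`P_SW(A,B) = q^{-c(A)} (p/(1−p))^{|B|} ∑_{σ} (1−p)^{|E(σ)|} 𝟙(σ ∈ Ω(A∪B))`. -/
theorem swendsenWang_factorization
    (q : ℕ) (hq : 1 ≤ q) (p : ℝ) (hp : p ∈ Set.Ioo (0 : ℝ) 1)
    (E : Finset (Sym2 V)) (hE : ∀ e ∈ E, ¬ e.IsDiag) :
    Mmat E q * (E.toList.map (Tmat E q p)).prod * MmatStar E q
      = Matrix.of (fun A B : RC E =>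
          ((q : ℝ) ^ numComp A.val)⁻¹ * (p / (1 - p)) ^ B.val.card *
            ∑ σ : V → Fin q,
              (1 - p) ^ (E.filter fun e => ∀ u v : V, e = s(u, v) → σ u = σ v).card *
                (if ∀ u v : V, s(u, v) ∈ A.val ∪ B.val → σ u = σ v
                  then (1 : ℝ) else 0)) := by
  have hp1 : (1 : ℝ) - p ≠ 0 := by have := hp.2; intro h; linarith
  apply Matrix.ext
  intro A B
  set T' := (E.toList.map (Tmat E q p)).prod with hT'
  set qinv : ℝ := ((q : ℝ) ^ numComp A.val)⁻¹ with hqinv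
  -- collapse the M* sum
  rw [Matrix.mul_apply]
  rw [show (∑ y : J E q, (Mmat E q * T') A y * MmatStar E q y B)
      = ∑ τ : V → Fin q, ∑ C : RC E, (Mmat E q * T') A (τ, C) * MmatStar E q (τ, C) B from
    @Fintype.sum_prod_type ℝ (V → Fin q) (RC E) _ _ _
      (fun y => (Mmat E q * T') A y * MmatStar E q y B)]
  have hstar : ∀ (τ : V → Fin q),
      (∑ C : RC E, (Mmat E q * T') A (τ, C) * MmatStar E q (τ, C) B)
        = (Mmat E q * T') A (τ, B) := by
    intro τ
    simp only [MmatStar, Matrix.of_apply]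
    exact collapse_sum3 (fun C => (Mmat E q * T') A (τ, C)) B
  simp only [hstar]
  -- collapse the M sum
  have hM : ∀ (τ : V → Fin q), (Mmat E q * T') A (τ, B)
      = ∑ σ : V → Fin q,
          (if ∀ u v : V, s(u, v) ∈ A.val → σ u = σ v then qinv else 0) * T' (σ, A) (τ, B) := by
    intro τ
    erw [Matrix.mul_apply]
    rw [show (∑ x : J E q, Mmat E q A x * T' x (τ, B))
        = ∑ σ : V → Fin q, ∑ C : RC E, Mmat E q A (σ, C) * T' (σ, C) (τ, B) from
      @Fintype.sum_prod_type ℝ (V → Fin q) (RC E) _ _ _ (fun x => Mmat E q A x * T' x (τ, B))]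
    apply Finset.sum_congr rfl
    intro σ _
    have hMval : ∀ C : RC E, Mmat E q A (σ, C)
        = if C = A then (if ∀ u v : V, s(u, v) ∈ A.val → σ u = σ v then qinv else 0) else 0 := by
      intro C
      simp only [Mmat]
      erw [Matrix.of_apply]
      simp only [ite_and]
      rfl
    simp only [hMval]
    exact collapse_sum (fun C => T' (σ, C) (τ, B)) A _
  simp only [hM]
  -- evaluate the product of T matrices
  have hTval : ∀ (σ τ : V → Fin q), T' (σ, A) (τ, B)
      = (if τ = σ then 1 else 0) *
          ∏ e ∈ E, (if mono σ e then (if e ∈ B.val then p else 1 - p)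
            else if e ∈ B.val then 0 else 1) := by
    intro σ τ
    rw [hT', Tprod_apply E q p E.toList σ τ B A (Finset.nodup_toList E)
      (fun e he => Finset.mem_toList.mp he), Finset.toList_toFinset]
    have hBE : B.val \ E = ∅ := Finset.sdiff_eq_empty_iff_subset.mpr B.2
    have hAE : A.val \ E = ∅ := Finset.sdiff_eq_empty_iff_subset.mpr A.2
    rw [hBE, hAE]
    simp
  simp only [hTval]
  -- swap sums and collapse τ
  rw [Finset.sum_comm]
  have hτ : ∀ (σ : V → Fin q),
      (∑ τ : V → Fin q,
        (if ∀ u v : V, s(u, v) ∈ A.val → σ u = σ v then qinv else 0) *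
          ((if τ = σ then 1 else 0) *
            ∏ e ∈ E, (if mono σ e then (if e ∈ B.val then p else 1 - p)
              else if e ∈ B.val then 0 else 1)))
        = (if ∀ u v : V, s(u, v) ∈ A.val → σ u = σ v then qinv else 0) *
            ∏ e ∈ E, (if mono σ e then (if e ∈ B.val then p else 1 - p)
              else if e ∈ B.val then 0 else 1) := by
    intro σ
    exact collapse_sum2 σ _ _
  simp only [hτ]
  -- now a termwise computation
  rw [Matrix.of_apply, mul_assoc, Finset.mul_sum, Finset.mul_sum]
  apply Finset.sum_congr rfl
  intro σ _
  have hfilter : (E.filter fun e => ∀ u v : V, e = s(u, v) → σ u = σ v)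
      = E.filter (mono σ) := Finset.filter_congr (fun e _ => Iff.rfl)
  rw [hfilter]
  by_cases hA : ∀ u v : V, s(u, v) ∈ A.val → σ u = σ v
  · by_cases hB : ∀ e ∈ B.val, mono σ e
    · have hAB : ∀ u v : V, s(u, v) ∈ A.val ∪ B.val → σ u = σ v := by
        intro u v h
        rcases Finset.mem_union.mp h with h | h
        · exact hA u v h
        · exact hB _ h u v rfl
      rw [if_pos hA, if_pos hAB, prod_w E q p hp1 σ B hB]
      ring
    · push_neg at hB
      obtain ⟨e, heB, hnm⟩ := hB
      have hz : (∏ e ∈ E, (if mono σ e then (if e ∈ B.val then p else 1 - p)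
          else if e ∈ B.val then 0 else 1)) = 0 :=
        Finset.prod_eq_zero (B.2 heB) (by rw [if_neg hnm, if_pos heB])
      have hAB : ¬ ∀ u v : V, s(u, v) ∈ A.val ∪ B.val → σ u = σ v := by
        intro h
        exact hnm fun u v hev => h u v (Finset.mem_union_right _ (hev ▸ heB))
      rw [hz, if_neg hAB]
      ring
  · have hAB : ¬ ∀ u v : V, s(u, v) ∈ A.val ∪ B.val → σ u = σ v := by
      intro h
      exact hA fun u v hv => h u v (Finset.mem_union_left _ hv)
    rw [if_neg hA, if_neg hAB]
    ring

end
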